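/- arXiv:1901.05690 — 5 statements merged into one kernel-verified Lean document; each statement's English description precedes it below -/
import Mathlib

section
/- Let X be a finite connected pre-ordered set and R a commutative ring with unity. Then every central-valued derivation of the incidence algebra I(X,R) is zero; that is, if D: I(X,R) → I(X,R) is a derivation with D(f) ∈ Z(I(X,R)) for all f, then D = 0. -/
open IncidenceAlgebra
open scoped Classical

variable {R X : Type*}

/-- The matrix unit `e_{x y}` of the incidence algebra (zero if `¬ x ≤ y`). -/
noncomputable def matrixUnit [CommRing R] [Preorder X] [DecidableEq X] (x y : X) :
    IncidenceAlgebra R X :=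
  ⟨fun u v => if u = x ∧ v = y ∧ x ≤ y then 1 else 0, fun a b hab => by
    try dsimp only
    split_ifs with h
    · exact absurd (by rw [h.1, h.2.1]; exact h.2.2) hab
    · rfl⟩

/-- The Lie bracket `[f,g] = fg - gf`. -/
def lieBr {A : Type*} [Ring A] (f g : A) : A := f * g - g * f

/-- `L` is a Lie triple derivation of the incidence algebra. -/
def IsLieTripleDer [CommRing R] [Preorder X] [DecidableEq X] [LocallyFiniteOrder X]
    (L : IncidenceAlgebra R X →ₗ[R] IncidenceAlgebra R X) : Prop :=
  ∀ f g h : IncidenceAlgebra R X,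
    L (lieBr (lieBr f g) h) =
      lieBr (lieBr (L f) g) h + lieBr (lieBr f (L g)) h + lieBr (lieBr f g) (L h)

/-- `X` is connected: any two points are joined by a chain of comparabilities. -/
def OrdConnected' (X : Type*) [Preorder X] : Prop :=
  ∀ x y : X, Relation.ReflTransGen (fun a b : X => a ≤ b ∨ b ≤ a) x y

/-- `R` is 2-torsion free. -/
def TwoTorsionFree (R : Type*) [CommRing R] : Prop := ∀ r : R, r + r = 0 → r = 0


section Aux
variable [CommRing R] [Preorder X] [DecidableEq X] [LocallyFiniteOrder X]

omit [LocallyFiniteOrder X] in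
lemma matrixUnit_apply (x y u v : X) :
    (matrixUnit x y : IncidenceAlgebra R X) u v = if u = x ∧ v = y ∧ x ≤ y then 1 else 0 := rfl

lemma matrixUnit_idem (x : X) :
    (matrixUnit x x : IncidenceAlgebra R X) * matrixUnit x x = matrixUnit x x := by
  ext a b hab
  simp only [mul_apply, matrixUnit_apply, le_refl, and_true]
  by_cases ha : a = x
  · by_cases hb : b = x
    · subst ha; subst hb
      simp [Finset.sum_ite_eq', Finset.mem_Icc]
    · simp [hb]
  · simp [ha]

lemma central_offdiag {z : IncidenceAlgebra R X}
    (hz : z ∈ Set.center (IncidenceAlgebra R X)) {u v : X} (huv : u ≠ v) : z u v = 0 := by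
  by_cases h : u ≤ v
  · have e := congrArg (fun w : IncidenceAlgebra R X => w u v) (hz.comm (matrixUnit v v))
    simp only [mul_apply, matrixUnit_apply, le_refl, and_true] at e
    rw [show (∑ w ∈ Finset.Icc u v, z u w * if w = v then 1 else 0) = z u v by
        simp [Finset.sum_ite_eq', Finset.mem_Icc, h]] at e
    rw [e]
    simp [huv]
  · exact apply_eq_zero_of_not_le h z

lemma central_diag_le {z : IncidenceAlgebra R X}
    (hz : z ∈ Set.center (IncidenceAlgebra R X)) {u v : X} (h : u ≤ v) : z u u = z v v := by
  have e := congrArg (fun w : IncidenceAlgebra R X => w u v) (hz.comm (matrixUnit u v))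
  simp only [mul_apply, matrixUnit_apply, h, and_true, eq_self_iff_true, true_and] at e
  rw [show (∑ w ∈ Finset.Icc u v, z u w * if w = u then 1 else 0) = z u u by
      simp [Finset.sum_ite_eq', Finset.mem_Icc, h], show
      (∑ w ∈ Finset.Icc u v, (if w = v then (1:R) else 0) * z w v) = z v v by
      simp [Finset.sum_ite_eq', Finset.mem_Icc, h]] at e
  exact e

lemma central_diag {z : IncidenceAlgebra R X} (hconn : OrdConnected' X)
    (hz : z ∈ Set.center (IncidenceAlgebra R X)) (u v : X) : z u u = z v v := by
  induction hconn u v with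
  | refl => rfl
  | tail _ hbc ih =>
      rcases hbc with h | h
      · exact ih.trans (central_diag_le hz h)
      · exact ih.trans (central_diag_le hz h).symm

lemma der_idem (D : IncidenceAlgebra R X →ₗ[R] IncidenceAlgebra R X)
    (hder : ∀ f g : IncidenceAlgebra R X, D (f * g) = D f * g + f * D g)
    (hcent : ∀ f : IncidenceAlgebra R X, D f ∈ Set.center (IncidenceAlgebra R X))
    (e : IncidenceAlgebra R X) (he : e * e = e) : D e = 0 := by
  have h1 : D e = e * D e + e * D e := by
    conv_lhs => rw [← he, hder, (hcent e).comm e]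
  have h2 : e * D e = e * D e + e * D e := by
    conv_lhs => rw [h1, mul_add, ← mul_assoc, he]
  have h3 : e * D e = 0 := left_eq_add.mp h2
  rw [h1, h3, add_zero]

end Aux

/-- On the incidence algebra of a finite connected pre-ordered set, every
central-valued derivation is zero. -/
theorem central_derivation_eq_zero [CommRing R] [Preorder X] [DecidableEq X] [Fintype X]
    [LocallyFiniteOrder X]
    (hconn : OrdConnected' X)
    (D : IncidenceAlgebra R X →ₗ[R] IncidenceAlgebra R X)
    (hder : ∀ f g : IncidenceAlgebra R X, D (f * g) = D f * g + f * D g)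
    (hcent : ∀ f : IncidenceAlgebra R X, D f ∈ Set.center (IncidenceAlgebra R X)) :
    D = 0 := by
  
  apply LinearMap.ext; intro f
  have hD1 : ∀ x : X, D (matrixUnit x x) = 0 := fun x =>
    der_idem D hder hcent _ (matrixUnit_idem x)
  have key : ∀ x : X, (matrixUnit x x : IncidenceAlgebra R X) * D f
      ∈ Set.center (IncidenceAlgebra R X) := by
    intro x
    have h : (matrixUnit x x : IncidenceAlgebra R X) * D f = D (matrixUnit x x * f) := by
      rw [hder, hD1, zero_mul, zero_add]
    rw [h]; exact hcent _
  ext u v huv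
  simp only [LinearMap.zero_apply, IncidenceAlgebra.zero_apply]
  by_cases hv : u = v
  · subst hv
    by_cases hy : ∃ y : X, y ≠ u
    · obtain ⟨y, hyu⟩ := hy
      have h1 : ((matrixUnit u u : IncidenceAlgebra R X) * D f) u u = D f u u := by
        simp [mul_apply, matrixUnit_apply, Finset.mem_Icc]
      have h2 : ((matrixUnit u u : IncidenceAlgebra R X) * D f) y y = 0 := by
        simp [mul_apply, matrixUnit_apply, hyu]
      have h3 := central_diag hconn (key u) u y
      rw [h1, h2] at h3
      exact h3
    · push_neg at hy
      have hf : f = f u u • 1 := by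
        ext a b hab
        rw [hy a, hy b]
        simp [constSMul_apply]
      rw [hf, map_smul, der_idem D hder hcent 1 (one_mul 1)]
      simp [constSMul_apply]
  · exact central_offdiag (hcent f) hv
end

section
/- Let X be a finite pre-ordered set (not necessarily connected) and R a 2-torsion free commutative ring with unity. Then every Lie triple derivation of I(X,R) is proper. -/
open IncidenceAlgebra
open scoped Classical

variable {R X : Type*}

/-- A Lie triple derivation is proper: a derivation plus a central-valued linear map
annihilating second commutators. -/
def IsProperLTD [CommRing R] [Preorder X] [DecidableEq X] [LocallyFiniteOrder X]
    (L : IncidenceAlgebra R X →ₗ[R] IncidenceAlgebra R X) : Prop :=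
  ∃ D F : IncidenceAlgebra R X →ₗ[R] IncidenceAlgebra R X,
    (∀ f g : IncidenceAlgebra R X, D (f * g) = D f * g + f * D g) ∧
    (∀ f : IncidenceAlgebra R X, F f ∈ Set.center (IncidenceAlgebra R X)) ∧
    (∀ f g h : IncidenceAlgebra R X, F (lieBr (lieBr f g) h) = 0) ∧
    L = D + F


namespace LTDProof
open Finset

section Infra
variable [CommRing R] [Preorder X] [DecidableEq X] [LocallyFiniteOrder X]




lemma matrixUnit_apply (x y u v : X) :
    (matrixUnit x y : IncidenceAlgebra R X) u v = if u = x ∧ v = y ∧ x ≤ y then 1 else 0 := rfl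

lemma matrixUnit_eq_zero {x y : X} (h : ¬ x ≤ y) : (matrixUnit x y : IncidenceAlgebra R X) = 0 := by
  ext u v _
  simp [matrixUnit_apply, h]

lemma unit_mul_apply (x y : X) (f : IncidenceAlgebra R X) (u v : X) :
    ((matrixUnit x y * f : IncidenceAlgebra R X)) u v = if u = x ∧ x ≤ y then f y v else 0 := by
  rw [mul_apply]
  have hs : ∀ w ∈ Icc u v,
      (matrixUnit x y : IncidenceAlgebra R X) u w * f w v
        = if w = y then (if u = x ∧ x ≤ y then f y v else 0) else 0 := by
    intro w _
    by_cases hw : w = y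
    · subst hw
      by_cases h : u = x ∧ x ≤ w
      · simp [matrixUnit_apply, h]
      · have hn : ¬(u = x ∧ w = w ∧ x ≤ w) := fun hc => h ⟨hc.1, hc.2.2⟩
        simp [matrixUnit_apply, hn, h]
    · simp [matrixUnit_apply, hw]
  rw [Finset.sum_congr rfl hs, Finset.sum_ite_eq' (Icc u v) y]
  by_cases hy : y ∈ Icc u v
  · rw [if_pos hy]
  · rw [if_neg hy]
    by_cases h : u = x ∧ x ≤ y
    · rw [if_pos h]
      obtain ⟨rfl, hxy⟩ := h
      rw [mem_Icc] at hy
      push_neg at hy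
      exact (apply_eq_zero_of_not_le (hy hxy) f).symm
    · rw [if_neg h]



lemma mul_unit_apply (x y : X) (f : IncidenceAlgebra R X) (u v : X) :
    ((f * matrixUnit x y : IncidenceAlgebra R X)) u v = if v = y ∧ x ≤ y then f u x else 0 := by
  rw [mul_apply]
  have hs : ∀ w ∈ Icc u v,
      f u w * (matrixUnit x y : IncidenceAlgebra R X) w v
        = if w = x then (if v = y ∧ x ≤ y then f u x else 0) else 0 := by
    intro w _
    by_cases hw : w = x
    · by_cases h : v = y ∧ x ≤ y
      · simp [matrixUnit_apply, hw, h, h.1, h.2]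
      · have hn : ¬(w = x ∧ v = y ∧ x ≤ y) := fun hc => h ⟨hc.2.1, hc.2.2⟩
        simp [matrixUnit_apply, hn, h, hw]
    · have hn : ¬(w = x ∧ v = y ∧ x ≤ y) := fun hc => hw hc.1
      simp [matrixUnit_apply, hn, hw]
  rw [Finset.sum_congr rfl hs, Finset.sum_ite_eq' (Icc u v) x]
  by_cases hx : x ∈ Icc u v
  · rw [if_pos hx]
  · rw [if_neg hx]
    by_cases h : v = y ∧ x ≤ y
    · rw [if_pos h]
      rw [mem_Icc] at hx
      push_neg at hx
      by_cases hux : u ≤ x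
      · exact absurd (h.2.trans_eq h.1.symm) (hx hux)
      · exact (apply_eq_zero_of_not_le hux f).symm
    · rw [if_neg h]

lemma unit_mul_unit (x y z w : X) :
    (matrixUnit x y * matrixUnit z w : IncidenceAlgebra R X) =
      if y = z ∧ x ≤ y ∧ z ≤ w then matrixUnit x w else 0 := by
  ext u v huv
  rw [unit_mul_apply, apply_ite (fun t : IncidenceAlgebra R X => t u v), IncidenceAlgebra.zero_apply]
  by_cases h1 : y = z
  · subst h1
    by_cases h2 : x ≤ y
    · by_cases h3 : y ≤ w
      · have hxw : x ≤ w := h2.trans h3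
        by_cases h4 : u = x <;> by_cases h5 : v = w <;> simp_all [matrixUnit_apply]
      · by_cases h4 : u = x <;> by_cases h5 : v = w <;> simp_all [matrixUnit_apply]
    · by_cases h4 : u = x <;> by_cases h5 : v = w <;> simp_all [matrixUnit_apply]
  · have hn : ¬(y = z ∧ x ≤ y ∧ z ≤ w) := fun hc => h1 hc.1
    rw [if_neg hn]
    by_cases h4 : u = x ∧ x ≤ y
    · rw [if_pos h4, matrixUnit_apply, if_neg (fun hc : y = z ∧ v = w ∧ z ≤ w => h1 hc.1)]
    · rw [if_neg h4]

lemma smul_mul_assoc' (r : R) (f g : IncidenceAlgebra R X) :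
    (r • f) * g = r • (f * g) := by
  ext u v _
  simp only [mul_apply, constSMul_apply, smul_eq_mul, Finset.mul_sum]
  exact sum_congr rfl fun w _ => by ring

lemma mul_smul_comm' (r : R) (f g : IncidenceAlgebra R X) :
    f * (r • g) = r • (f * g) := by
  ext u v _
  simp only [mul_apply, constSMul_apply, smul_eq_mul, Finset.mul_sum]
  exact sum_congr rfl fun w _ => by ring

lemma central_of (f : IncidenceAlgebra R X) (h0 : ∀ u v : X, u ≠ v → f u v = 0)
    (hc : ∀ u v : X, u ≤ v → f u u = f v v) : f ∈ Set.center (IncidenceAlgebra R X) := by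
  rw [Semigroup.mem_center_iff]
  intro g
  ext u v huv
  rw [mul_apply, mul_apply]
  have h1 : ∀ w ∈ Icc u v, g u w * f w v = if w = v then g u v * f v v else 0 := by
    intro w _
    by_cases h : w = v
    · subst h; rw [if_pos rfl]
    · rw [h0 w v h, mul_zero, if_neg h]
  have h2 : ∀ w ∈ Icc u v, f u w * g w v = if w = u then f u u * g u v else 0 := by
    intro w _
    by_cases h : w = u
    · subst h; rw [if_pos rfl]
    · rw [h0 u w (Ne.symm h), zero_mul, if_neg h]
  rw [Finset.sum_congr rfl h1, Finset.sum_congr rfl h2,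
    Finset.sum_ite_eq' (Icc u v) v, Finset.sum_ite_eq' (Icc u v) u,
    if_pos (mem_Icc.mpr ⟨huv, le_refl v⟩), if_pos (mem_Icc.mpr ⟨le_refl u, huv⟩),
    hc u v huv]
  ring

lemma center_smul (r : R) {z : IncidenceAlgebra R X}
    (hz : z ∈ Set.center (IncidenceAlgebra R X)) :
    r • z ∈ Set.center (IncidenceAlgebra R X) := by
  rw [Semigroup.mem_center_iff] at hz ⊢
  intro g
  rw [mul_smul_comm', smul_mul_assoc', hz g]

lemma sum_apply' {ι : Type*} (s : Finset ι) (g : ι → IncidenceAlgebra R X) (u v : X) :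
    (∑ i ∈ s, g i) u v = ∑ i ∈ s, g i u v := by
  classical
  induction s using Finset.cons_induction with
  | empty => simp [IncidenceAlgebra.zero_apply]
  | cons a s ha ih => rw [Finset.sum_cons, Finset.sum_cons, IncidenceAlgebra.add_apply, ih]

lemma one_eq_sum [Fintype X] :
    (1 : IncidenceAlgebra R X) = ∑ w : X, matrixUnit w w := by
  ext u v huv
  rw [sum_apply', one_apply]
  rw [Finset.sum_eq_single u]
  · by_cases h : u = v
    · subst h; simp [matrixUnit_apply]
    · have hvu : ¬ v = u := fun hc => h hc.symm
      simp [matrixUnit_apply, h, hvu]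
  · intro w _ hwu
    have : ¬(u = w ∧ v = w ∧ w ≤ w) := fun hc => hwu (hc.1 ▸ rfl)
    rw [matrixUnit_apply, if_neg this]
  · intro h; exact absurd (Finset.mem_univ u) h

lemma sum_repr [Fintype X] (f : IncidenceAlgebra R X) :
    f = ∑ p : X × X, f p.1 p.2 • matrixUnit p.1 p.2 := by
  ext u v huv
  rw [sum_apply', Finset.sum_eq_single ((u, v) : X × X)]
  · rw [constSMul_apply, matrixUnit_apply, if_pos ⟨rfl, rfl, huv⟩, smul_eq_mul, mul_one]
  · intro p _ hp
    have : ¬(u = p.1 ∧ v = p.2 ∧ p.1 ≤ p.2) := by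
      rintro ⟨h1, h2, -⟩; exact hp (Prod.ext h1.symm h2.symm)
    rw [constSMul_apply, matrixUnit_apply, if_neg this, smul_zero]
  · intro h; exact absurd (Finset.mem_univ _) h



noncomputable def had (σ : X → X → R) (f : IncidenceAlgebra R X) : IncidenceAlgebra R X :=
  ⟨fun u v => σ u v * f u v, fun a b h => by
    rw [apply_eq_zero_of_not_le h, mul_zero]⟩

lemma had_apply (σ : X → X → R) (f : IncidenceAlgebra R X) (u v : X) :
    had σ f u v = σ u v * f u v := rfl

noncomputable def Dmap (b : IncidenceAlgebra R X) (σ : X → X → R) :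
    IncidenceAlgebra R X →ₗ[R] IncidenceAlgebra R X where
  toFun f := b * f - f * b + had σ f
  map_add' f g := by
    have h1 : had σ (f + g) = had σ f + had σ g := by
      ext u v _; simp [had_apply, IncidenceAlgebra.add_apply, mul_add]
    rw [h1, mul_add, add_mul]; abel
  map_smul' r f := by
    have h1 : had σ (r • f) = r • had σ f := by
      ext u v _
      rw [had_apply, constSMul_apply, constSMul_apply, had_apply, smul_eq_mul, smul_eq_mul]
      ring
    rw [RingHom.id_apply, h1, mul_smul_comm', smul_mul_assoc', smul_add, smul_sub]

lemma Dmap_apply (b : IncidenceAlgebra R X) (σ : X → X → R) (f : IncidenceAlgebra R X) :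
    Dmap b σ f = b * f - f * b + had σ f := rfl

lemma Dmap_leibniz (b : IncidenceAlgebra R X) (σ : X → X → R)
    (hσ : ∀ u w v : X, u ≤ w → w ≤ v → σ u v = σ u w + σ w v)
    (f g : IncidenceAlgebra R X) :
    Dmap b σ (f * g) = Dmap b σ f * g + f * Dmap b σ g := by
  have hhad : had σ (f * g) = had σ f * g + f * had σ g := by
    ext u v _
    rw [IncidenceAlgebra.add_apply, had_apply, mul_apply, mul_apply, mul_apply, Finset.mul_sum,
      ← Finset.sum_add_distrib]
    refine sum_congr rfl fun w hw => ?_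
    obtain ⟨hw1, hw2⟩ := mem_Icc.mp hw
    rw [had_apply, had_apply]
    have := hσ u w v hw1 hw2
    linear_combination (f u w * g w v) * this
  rw [Dmap_apply, Dmap_apply, Dmap_apply, hhad]
  noncomm_ring

lemma lieBr_zero_left {A : Type*} [Ring A] (g : A) : lieBr 0 g = 0 := by simp [lieBr]

lemma lieBr_sub_left {A : Type*} [Ring A] (a b c : A) :
    lieBr (a - b) c = lieBr a c - lieBr b c := by simp [lieBr]; noncomm_ring

lemma lieBr_sub_right {A : Type*} [Ring A] (a b c : A) :
    lieBr a (b - c) = lieBr a b - lieBr a c := by simp [lieBr]; noncomm_ring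

lemma lieBr_central_left {A : Type*} [Ring A] {z : A} (hz : z ∈ Set.center A) (g : A) :
    lieBr z g = 0 := by
  rw [Semigroup.mem_center_iff] at hz
  rw [lieBr, hz g, sub_self]

lemma lieBr_central_right {A : Type*} [Ring A] {z : A} (hz : z ∈ Set.center A) (g : A) :
    lieBr g z = 0 := by
  rw [Semigroup.mem_center_iff] at hz
  rw [lieBr, hz g, sub_self]



end Infra


lemma lieBr_add_left {A : Type*} [Ring A] (a b c : A) :
    lieBr (a + b) c = lieBr a c + lieBr b c := by simp only [lieBr]; noncomm_ring

lemma lieBr_one_left {A : Type*} [Ring A] (g : A) : lieBr 1 g = 0 := by simp [lieBr]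

section Main
variable [CommRing R] [Preorder X] [DecidableEq X] [LocallyFiniteOrder X]

section Scalars
variable {L : IncidenceAlgebra R X →ₗ[R] IncidenceAlgebra R X}
variable (hL : IsLieTripleDer L)
include hL



lemma S4 {x y u : X} (hxy : x ≠ y) (hux : u ≠ x) (huy : u ≠ y) :
    L (matrixUnit y y) u x = 0 := by
  have hb : lieBr (matrixUnit x x) (matrixUnit y y) = (0 : IncidenceAlgebra R X) := by
    simp [lieBr, unit_mul_unit, hxy, hxy.symm]
  have h1 := hL (matrixUnit x x) (matrixUnit y y) (matrixUnit x x)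
  simp only [hb, lieBr_zero_left, map_zero, add_zero] at h1
  have h2 := congrArg (fun M : IncidenceAlgebra R X => M u x) h1
  simp only [lieBr, sub_mul, mul_sub, IncidenceAlgebra.add_apply, IncidenceAlgebra.sub_apply, unit_mul_apply, mul_unit_apply,
    IncidenceAlgebra.zero_apply, le_refl, and_true, true_and, if_true] at h2
  simp only [if_neg hux, if_neg huy, if_neg hxy, if_neg hxy.symm] at h2
  linear_combination h2

lemma S3 {x y : X} (hxy : x ≠ y) :
    L (matrixUnit y y) y x = - L (matrixUnit x x) y x := by
  have hb : lieBr (matrixUnit x x) (matrixUnit y y) = (0 : IncidenceAlgebra R X) := by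
    simp [lieBr, unit_mul_unit, hxy, hxy.symm]
  have h1 := hL (matrixUnit x x) (matrixUnit y y) (matrixUnit x x)
  simp only [hb, lieBr_zero_left, map_zero, add_zero] at h1
  have h2 := congrArg (fun M : IncidenceAlgebra R X => M y x) h1
  simp only [lieBr, sub_mul, mul_sub, IncidenceAlgebra.add_apply, IncidenceAlgebra.sub_apply, unit_mul_apply, mul_unit_apply,
    IncidenceAlgebra.zero_apply, le_refl, and_true, true_and, if_true] at h2
  simp only [if_neg hxy, if_neg hxy.symm, if_pos rfl] at h2
  linear_combination h2

lemma L1_offdiag {u y : X} (h : u ≠ y) : L 1 u y = 0 := by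
  have h1 := hL 1 (matrixUnit y y) (matrixUnit y y)
  simp only [lieBr_one_left, lieBr_zero_left, map_zero, add_zero, zero_add] at h1
  have h2 := congrArg (fun M : IncidenceAlgebra R X => M u y) h1
  simp only [lieBr, sub_mul, mul_sub, IncidenceAlgebra.add_apply, IncidenceAlgebra.sub_apply, unit_mul_apply, mul_unit_apply,
    IncidenceAlgebra.zero_apply, le_refl, and_true, true_and, if_true] at h2
  simp only [if_neg h] at h2
  linear_combination -h2

lemma L1_diag {x y : X} (hxy : x ≤ y) : L 1 x x = L 1 y y := by
  by_cases hne : x = y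
  · rw [hne]
  · have h1 := hL 1 (matrixUnit x y) (matrixUnit y y)
    simp only [lieBr_one_left, lieBr_zero_left, map_zero, add_zero, zero_add] at h1
    have h2 := congrArg (fun M : IncidenceAlgebra R X => M x y) h1
    simp only [lieBr, sub_mul, mul_sub, IncidenceAlgebra.add_apply, IncidenceAlgebra.sub_apply, unit_mul_apply, mul_unit_apply,
      IncidenceAlgebra.zero_apply, le_refl, and_true, true_and, if_true] at h2
    simp only [if_pos rfl, if_neg hne, if_neg (Ne.symm hne), hxy, if_true, and_true,
      true_and] at h2
    linear_combination -h2

lemma S13 {x u v : X} (huv : u ≤ v) (hne : u ≠ v) (hux : u ≠ x) (hvx : v ≠ x) :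
    L (matrixUnit x x) u u = L (matrixUnit x x) v v := by
  have hb : lieBr (matrixUnit x x) (matrixUnit u v) = (0 : IncidenceAlgebra R X) := by
    simp [lieBr, unit_mul_unit, hux.symm, hvx]
  have h1 := hL (matrixUnit x x) (matrixUnit u v) (matrixUnit v v)
  simp only [hb, lieBr_zero_left, map_zero, add_zero] at h1
  have h2 := congrArg (fun M : IncidenceAlgebra R X => M u v) h1
  simp only [lieBr, sub_mul, mul_sub, IncidenceAlgebra.add_apply, IncidenceAlgebra.sub_apply, unit_mul_apply, mul_unit_apply,
    IncidenceAlgebra.zero_apply, le_refl, and_true, true_and, if_true] at h2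
  simp only [if_pos rfl, hne, hux, hvx, Ne.symm hne, Ne.symm hux, Ne.symm hvx, huv,
    if_true, if_false, and_true, true_and, ite_true, ite_false] at h2
  linear_combination -h2




lemma S14 {x y : X} (hxy : x ≤ y) (hne : x ≠ y) :
    L (matrixUnit x x) x x - L (matrixUnit x x) y y
      = L (matrixUnit y y) x x - L (matrixUnit y y) y y := by
  have hb1 : lieBr (matrixUnit x x) (matrixUnit x y) = (matrixUnit x y : IncidenceAlgebra R X) := by
    simp [lieBr, unit_mul_unit, hxy, hne.symm]
  have hb2 : lieBr (matrixUnit x y) (matrixUnit y y) = (matrixUnit x y : IncidenceAlgebra R X) := by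
    simp [lieBr, unit_mul_unit, hxy, hne, hne.symm]
  have h1 := hL (matrixUnit x x) (matrixUnit x y) (matrixUnit y y)
  rw [hb1, hb2] at h1
  have h2 := congrArg (fun M : IncidenceAlgebra R X => M x y) h1
  simp only [lieBr, sub_mul, mul_sub, IncidenceAlgebra.add_apply, IncidenceAlgebra.sub_apply, unit_mul_apply, mul_unit_apply,
    IncidenceAlgebra.zero_apply, le_refl, and_true, true_and, if_true] at h2
  simp only [hxy, hne, Ne.symm hne, if_pos rfl, if_true, if_false, and_true, true_and,
    ite_true, ite_false] at h2
  linear_combination -h2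

lemma Qxx {x y : X} (hxy : x ≤ y) (hne : x ≠ y) :
    L (matrixUnit x y) x x = L (matrixUnit y y) y x := by
  have hb1 : lieBr (matrixUnit x x) (matrixUnit x y) = (matrixUnit x y : IncidenceAlgebra R X) := by
    simp [lieBr, unit_mul_unit, hxy, hne.symm]
  have hb2 : lieBr (matrixUnit x y) (matrixUnit y y) = (matrixUnit x y : IncidenceAlgebra R X) := by
    simp [lieBr, unit_mul_unit, hxy, hne, hne.symm]
  have h1 := hL (matrixUnit x x) (matrixUnit x y) (matrixUnit y y)
  rw [hb1, hb2] at h1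
  have h2 := congrArg (fun M : IncidenceAlgebra R X => M x x) h1
  simp only [lieBr, sub_mul, mul_sub, IncidenceAlgebra.add_apply, IncidenceAlgebra.sub_apply, unit_mul_apply, mul_unit_apply,
    IncidenceAlgebra.zero_apply, le_refl, and_true, true_and, if_true] at h2
  simp only [hxy, hne, Ne.symm hne, if_pos rfl, if_true, if_false, and_true, true_and,
    ite_true, ite_false] at h2
  linear_combination h2

lemma Qyy {x y : X} (hxy : x ≤ y) (hne : x ≠ y) :
    L (matrixUnit x y) y y = - L (matrixUnit y y) y x := by
  have hb1 : lieBr (matrixUnit x x) (matrixUnit x y) = (matrixUnit x y : IncidenceAlgebra R X) := by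
    simp [lieBr, unit_mul_unit, hxy, hne.symm]
  have hb2 : lieBr (matrixUnit x y) (matrixUnit y y) = (matrixUnit x y : IncidenceAlgebra R X) := by
    simp [lieBr, unit_mul_unit, hxy, hne, hne.symm]
  have h1 := hL (matrixUnit x x) (matrixUnit x y) (matrixUnit y y)
  rw [hb1, hb2] at h1
  have h2 := congrArg (fun M : IncidenceAlgebra R X => M y y) h1
  simp only [lieBr, sub_mul, mul_sub, IncidenceAlgebra.add_apply, IncidenceAlgebra.sub_apply, unit_mul_apply, mul_unit_apply,
    IncidenceAlgebra.zero_apply, le_refl, and_true, true_and, if_true] at h2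
  simp only [hxy, hne, Ne.symm hne, if_pos rfl, if_true, if_false, and_true, true_and,
    ite_true, ite_false] at h2
  linear_combination h2

lemma Qdiag0 {x y u : X} (hxy : x ≤ y) (hne : x ≠ y) (hux : u ≠ x) (huy : u ≠ y) :
    L (matrixUnit x y) u u = 0 := by
  have hb1 : lieBr (matrixUnit x x) (matrixUnit x y) = (matrixUnit x y : IncidenceAlgebra R X) := by
    simp [lieBr, unit_mul_unit, hxy, hne.symm]
  have hb2 : lieBr (matrixUnit x y) (matrixUnit y y) = (matrixUnit x y : IncidenceAlgebra R X) := by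
    simp [lieBr, unit_mul_unit, hxy, hne, hne.symm]
  have h1 := hL (matrixUnit x x) (matrixUnit x y) (matrixUnit y y)
  rw [hb1, hb2] at h1
  have h2 := congrArg (fun M : IncidenceAlgebra R X => M u u) h1
  simp only [lieBr, sub_mul, mul_sub, IncidenceAlgebra.add_apply, IncidenceAlgebra.sub_apply, unit_mul_apply, mul_unit_apply,
    IncidenceAlgebra.zero_apply, le_refl, and_true, true_and, if_true] at h2
  simp only [hxy, hne, Ne.symm hne, hux, huy, Ne.symm hux, Ne.symm huy, if_pos rfl,
    if_true, if_false, and_true, true_and, ite_true, ite_false] at h2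
  linear_combination h2

lemma Qrow {x y u : X} (hxy : x ≤ y) (hne : x ≠ y) (hux : u ≠ x) (huy : u ≠ y) :
    L (matrixUnit x y) u y = L (matrixUnit x x) u x - L (matrixUnit y y) u x := by
  have hb1 : lieBr (matrixUnit x x) (matrixUnit x y) = (matrixUnit x y : IncidenceAlgebra R X) := by
    simp [lieBr, unit_mul_unit, hxy, hne.symm]
  have hb2 : lieBr (matrixUnit x y) (matrixUnit y y) = (matrixUnit x y : IncidenceAlgebra R X) := by
    simp [lieBr, unit_mul_unit, hxy, hne, hne.symm]
  have h1 := hL (matrixUnit x x) (matrixUnit x y) (matrixUnit y y)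
  rw [hb1, hb2] at h1
  have h2 := congrArg (fun M : IncidenceAlgebra R X => M u y) h1
  simp only [lieBr, sub_mul, mul_sub, IncidenceAlgebra.add_apply, IncidenceAlgebra.sub_apply, unit_mul_apply, mul_unit_apply,
    IncidenceAlgebra.zero_apply, le_refl, and_true, true_and, if_true] at h2
  simp only [hxy, hne, Ne.symm hne, hux, huy, Ne.symm hux, Ne.symm huy, if_pos rfl,
    if_true, if_false, and_true, true_and, ite_true, ite_false] at h2
  linear_combination h2

lemma Qcol {x y v : X} (hxy : x ≤ y) (hne : x ≠ y) (hvx : v ≠ x) (hvy : v ≠ y) :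
    L (matrixUnit x y) x v = L (matrixUnit y y) y v := by
  have hb1 : lieBr (matrixUnit x x) (matrixUnit x y) = (matrixUnit x y : IncidenceAlgebra R X) := by
    simp [lieBr, unit_mul_unit, hxy, hne.symm]
  have hb2 : lieBr (matrixUnit x y) (matrixUnit y y) = (matrixUnit x y : IncidenceAlgebra R X) := by
    simp [lieBr, unit_mul_unit, hxy, hne, hne.symm]
  have h1 := hL (matrixUnit x x) (matrixUnit x y) (matrixUnit y y)
  rw [hb1, hb2] at h1
  have h2 := congrArg (fun M : IncidenceAlgebra R X => M x v) h1
  simp only [lieBr, sub_mul, mul_sub, IncidenceAlgebra.add_apply, IncidenceAlgebra.sub_apply, unit_mul_apply, mul_unit_apply,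
    IncidenceAlgebra.zero_apply, le_refl, and_true, true_and, if_true] at h2
  simp only [hxy, hne, Ne.symm hne, hvx, hvy, Ne.symm hvx, Ne.symm hvy, if_pos rfl,
    if_true, if_false, and_true, true_and, ite_true, ite_false] at h2
  linear_combination h2

lemma Qz1 {x y v : X} (hxy : x ≤ y) (hne : x ≠ y) (hvx : v ≠ x) (hvy : v ≠ y) :
    L (matrixUnit x y) y v = 0 := by
  have hb1 : lieBr (matrixUnit x x) (matrixUnit x y) = (matrixUnit x y : IncidenceAlgebra R X) := by
    simp [lieBr, unit_mul_unit, hxy, hne.symm]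
  have hb2 : lieBr (matrixUnit x y) (matrixUnit y y) = (matrixUnit x y : IncidenceAlgebra R X) := by
    simp [lieBr, unit_mul_unit, hxy, hne, hne.symm]
  have h1 := hL (matrixUnit x x) (matrixUnit x y) (matrixUnit y y)
  rw [hb1, hb2] at h1
  have h2 := congrArg (fun M : IncidenceAlgebra R X => M y v) h1
  simp only [lieBr, sub_mul, mul_sub, IncidenceAlgebra.add_apply, IncidenceAlgebra.sub_apply, unit_mul_apply, mul_unit_apply,
    IncidenceAlgebra.zero_apply, le_refl, and_true, true_and, if_true] at h2
  simp only [hxy, hne, Ne.symm hne, hvx, hvy, Ne.symm hvx, Ne.symm hvy, if_pos rfl,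
    if_true, if_false, and_true, true_and, ite_true, ite_false] at h2
  linear_combination h2

lemma Qz2 {x y u : X} (hxy : x ≤ y) (hne : x ≠ y) (hux : u ≠ x) (huy : u ≠ y) :
    L (matrixUnit x y) u x = 0 := by
  have hb1 : lieBr (matrixUnit x x) (matrixUnit x y) = (matrixUnit x y : IncidenceAlgebra R X) := by
    simp [lieBr, unit_mul_unit, hxy, hne.symm]
  have hb2 : lieBr (matrixUnit x y) (matrixUnit y y) = (matrixUnit x y : IncidenceAlgebra R X) := by
    simp [lieBr, unit_mul_unit, hxy, hne, hne.symm]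
  have h1 := hL (matrixUnit x x) (matrixUnit x y) (matrixUnit y y)
  rw [hb1, hb2] at h1
  have h2 := congrArg (fun M : IncidenceAlgebra R X => M u x) h1
  simp only [lieBr, sub_mul, mul_sub, IncidenceAlgebra.add_apply, IncidenceAlgebra.sub_apply, unit_mul_apply, mul_unit_apply,
    IncidenceAlgebra.zero_apply, le_refl, and_true, true_and, if_true] at h2
  simp only [hxy, hne, Ne.symm hne, hux, huy, Ne.symm hux, Ne.symm huy, if_pos rfl,
    if_true, if_false, and_true, true_and, ite_true, ite_false] at h2
  linear_combination h2

lemma Qz3 {x y u v : X} (hxy : x ≤ y) (hne : x ≠ y) (hux : u ≠ x) (huy : u ≠ y)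
    (hvx : v ≠ x) (hvy : v ≠ y) :
    L (matrixUnit x y) u v = 0 := by
  have hb1 : lieBr (matrixUnit x x) (matrixUnit x y) = (matrixUnit x y : IncidenceAlgebra R X) := by
    simp [lieBr, unit_mul_unit, hxy, hne.symm]
  have hb2 : lieBr (matrixUnit x y) (matrixUnit y y) = (matrixUnit x y : IncidenceAlgebra R X) := by
    simp [lieBr, unit_mul_unit, hxy, hne, hne.symm]
  have h1 := hL (matrixUnit x x) (matrixUnit x y) (matrixUnit y y)
  rw [hb1, hb2] at h1
  have h2 := congrArg (fun M : IncidenceAlgebra R X => M u v) h1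
  simp only [lieBr, sub_mul, mul_sub, IncidenceAlgebra.add_apply, IncidenceAlgebra.sub_apply, unit_mul_apply, mul_unit_apply,
    IncidenceAlgebra.zero_apply, le_refl, and_true, true_and, if_true] at h2
  simp only [hxy, hne, Ne.symm hne, hux, huy, hvx, hvy, Ne.symm hux, Ne.symm huy,
    Ne.symm hvx, Ne.symm hvy, if_pos rfl, if_true, if_false, and_true, true_and,
    ite_true, ite_false] at h2
  linear_combination h2




lemma B4 (htf : TwoTorsionFree R) {x y : X} (hxy : x ≤ y) (hyx : y ≤ x) (hne : x ≠ y) :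
    L (matrixUnit x y) y x = 0 := by
  have hb3 : lieBr (matrixUnit x y) (matrixUnit y x)
      = (matrixUnit x x - matrixUnit y y : IncidenceAlgebra R X) := by
    simp [lieBr, unit_mul_unit, hxy, hyx]
  have hb4 : lieBr (matrixUnit x x - matrixUnit y y) (matrixUnit x y)
      = (matrixUnit x y + matrixUnit x y : IncidenceAlgebra R X) := by
    rw [lieBr, sub_mul, mul_sub]
    simp only [unit_mul_unit, hxy, hyx, hne, hne.symm, le_refl, if_pos, if_neg, and_true,
      true_and, and_self, if_true, if_false, ite_true, ite_false, if_pos rfl]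
    simp [hne, hne.symm]
  have h1 := hL (matrixUnit x y) (matrixUnit y x) (matrixUnit x y)
  rw [hb3, hb4, map_add] at h1
  have h2 := congrArg (fun M : IncidenceAlgebra R X => M y x) h1
  simp only [lieBr, sub_mul, mul_sub, IncidenceAlgebra.add_apply, IncidenceAlgebra.sub_apply, unit_mul_apply, mul_unit_apply,
    IncidenceAlgebra.zero_apply, le_refl, and_true, true_and, if_true] at h2
  simp only [hxy, hyx, hne, Ne.symm hne, if_pos rfl, if_true, if_false, and_true, true_and,
    ite_true, ite_false] at h2
  have h4 : (L (matrixUnit x y) y x + L (matrixUnit x y) y x)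
      + (L (matrixUnit x y) y x + L (matrixUnit x y) y x) = 0 := by linear_combination h2
  exact htf _ (htf _ h4)

lemma anti (htf : TwoTorsionFree R) {x y : X} (hxy : x ≤ y) (hyx : y ≤ x) (hne : x ≠ y) :
    L (matrixUnit x y) x y + L (matrixUnit y x) y x = 0 := by
  have hb3 : lieBr (matrixUnit x y) (matrixUnit y x)
      = (matrixUnit x x - matrixUnit y y : IncidenceAlgebra R X) := by
    simp [lieBr, unit_mul_unit, hxy, hyx]
  have hb4 : lieBr (matrixUnit x x - matrixUnit y y) (matrixUnit x y)
      = (matrixUnit x y + matrixUnit x y : IncidenceAlgebra R X) := by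
    rw [lieBr, sub_mul, mul_sub]
    simp only [unit_mul_unit, hxy, hyx, hne, hne.symm, le_refl, if_pos, if_neg, and_true,
      true_and, and_self, if_true, if_false, ite_true, ite_false, if_pos rfl]
    simp [hne, hne.symm]
  have h1 := hL (matrixUnit x y) (matrixUnit y x) (matrixUnit x y)
  rw [hb3, hb4, map_add] at h1
  have h2 := congrArg (fun M : IncidenceAlgebra R X => M x y) h1
  simp only [lieBr, sub_mul, mul_sub, IncidenceAlgebra.add_apply, IncidenceAlgebra.sub_apply, unit_mul_apply, mul_unit_apply,
    IncidenceAlgebra.zero_apply, le_refl, and_true, true_and, if_true] at h2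
  simp only [hxy, hyx, hne, Ne.symm hne, if_pos rfl, if_true, if_false, and_true, true_and,
    ite_true, ite_false] at h2
  have h4 : (L (matrixUnit x y) x y + L (matrixUnit y x) y x)
      + (L (matrixUnit x y) x y + L (matrixUnit y x) y x) = 0 := by linear_combination -h2
  exact htf _ h4

lemma chain_raw {x y z : X} (hxy : x ≤ y) (hyz : y ≤ z) (hnexy : x ≠ y) (hneyz : y ≠ z)
    (hnexz : x ≠ z) :
    L (matrixUnit x z) x z = L (matrixUnit x y) x y + L (matrixUnit y z) y z
      + (L (matrixUnit z z) z z - L (matrixUnit z z) x x) := by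
  have hxz : x ≤ z := hxy.trans hyz
  have hb5 : lieBr (matrixUnit x y) (matrixUnit y z) = (matrixUnit x z : IncidenceAlgebra R X) := by
    simp [lieBr, unit_mul_unit, hxy, hyz, Ne.symm hnexz]
  have hb6 : lieBr (matrixUnit x z) (matrixUnit z z) = (matrixUnit x z : IncidenceAlgebra R X) := by
    simp [lieBr, unit_mul_unit, hxz, hnexz, hnexz.symm]
  have h1 := hL (matrixUnit x y) (matrixUnit y z) (matrixUnit z z)
  rw [hb5, hb6] at h1
  have h2 := congrArg (fun M : IncidenceAlgebra R X => M x z) h1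
  simp only [lieBr, sub_mul, mul_sub, IncidenceAlgebra.add_apply, IncidenceAlgebra.sub_apply, unit_mul_apply, mul_unit_apply,
    IncidenceAlgebra.zero_apply, le_refl, and_true, true_and, if_true] at h2
  simp only [hxy, hyz, hxz, hnexy, hneyz, hnexz, Ne.symm hnexy, Ne.symm hneyz, Ne.symm hnexz,
    if_pos rfl, if_true, if_false, and_true, true_and, ite_true, ite_false] at h2
  linear_combination h2


lemma diag_pair [Fintype X] (htf : TwoTorsionFree R) {u v : X} (huv : u ≤ v) (hne : u ≠ v) :
    L (matrixUnit u u) u u - L (matrixUnit u u) v v = 0 := by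
  have hsum0 : ∑ w : X, (L (matrixUnit w w) u u - L (matrixUnit w w) v v) = 0 := by
    have h1 : (L 1 : IncidenceAlgebra R X) = ∑ w : X, L (matrixUnit w w) := by
      rw [one_eq_sum, map_sum]
    have h2 : L 1 u u = L 1 v v := L1_diag hL huv
    rw [Finset.sum_sub_distrib, ← sum_apply', ← sum_apply', ← h1, h2, sub_self]
  have hrest : ∀ w ∈ (univ : Finset X), w ∉ ({u, v} : Finset X) →
      (L (matrixUnit w w) u u - L (matrixUnit w w) v v) = 0 := by
    intro w _ hw
    rw [Finset.mem_insert, Finset.mem_singleton] at hw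
    push_neg at hw
    rw [S13 hL huv hne (Ne.symm hw.1) (Ne.symm hw.2), sub_self]
  have hpair : (L (matrixUnit u u) u u - L (matrixUnit u u) v v)
      + (L (matrixUnit v v) u u - L (matrixUnit v v) v v) = 0 := by
    have hp2 : ∑ w ∈ ({u, v} : Finset X),
        (L (matrixUnit w w) u u - L (matrixUnit w w) v v) = 0 := by
      rw [Finset.sum_subset (Finset.subset_univ _) hrest]
      exact hsum0
    rw [Finset.sum_pair hne] at hp2
    exact hp2
  have h14 := S14 hL huv hne
  exact htf _ (by linear_combination hpair + h14)

lemma hCc [Fintype X] (htf : TwoTorsionFree R) (x : X) {u v : X} (huv : u ≤ v) :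
    L (matrixUnit x x) u u = L (matrixUnit x x) v v := by
  by_cases hne : u = v
  · rw [hne]
  · by_cases hux : u = x
    · subst hux
      have h1 := diag_pair hL htf huv hne
      linear_combination h1
    · by_cases hvx : v = x
      · subst hvx
        have h1 := diag_pair hL htf huv hne
        have h2 := S14 hL huv hne
        linear_combination h1 - h2
      · exact S13 hL huv hne hux hvx



end Scalars

noncomputable def sig (L : IncidenceAlgebra R X →ₗ[R] IncidenceAlgebra R X) (u v : X) : R :=
  if u = v then 0 else L (matrixUnit u v) u v

noncomputable def bElt (L : IncidenceAlgebra R X →ₗ[R] IncidenceAlgebra R X) :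
    IncidenceAlgebra R X :=
  ⟨fun u v => if u = v then 0 else -(L (matrixUnit u u) u v), by
    intro a b hab
    by_cases h : a = b
    · rw [if_pos h]
    · rw [if_neg h, apply_eq_zero_of_not_le hab, neg_zero]⟩

lemma bElt_apply (L : IncidenceAlgebra R X →ₗ[R] IncidenceAlgebra R X) (u v : X) :
    bElt L u v = if u = v then 0 else -(L (matrixUnit u u) u v) := rfl


section T
variable {L : IncidenceAlgebra R X →ₗ[R] IncidenceAlgebra R X}
variable (hL : IsLieTripleDer L)
include hL



lemma cocycle [Fintype X] (htf : TwoTorsionFree R) :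
    ∀ u w v : X, u ≤ w → w ≤ v → sig L u v = sig L u w + sig L w v := by
  intro u w v huw hwv
  by_cases h1 : u = w
  · subst h1; simp [sig]
  · by_cases h2 : w = v
    · subst h2; simp [sig]
    · by_cases h3 : u = v
      · subst h3
        have hanti := anti hL htf huw hwv h1
        rw [show sig L u u = 0 from by simp [sig],
          show sig L u w = L (matrixUnit u w) u w from by simp [sig, h1],
          show sig L w u = L (matrixUnit w u) w u from by simp [sig, h2]]
        linear_combination -hanti
      · have hch := chain_raw hL huw hwv h1 h2 h3
        have hc := hCc hL htf v (huw.trans hwv)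
        simp only [sig, if_neg h1, if_neg h2, if_neg h3]
        linear_combination hch - hc

lemma F_offdiag_unit (htf : TwoTorsionFree R) {x y : X} (hxy : x ≤ y) (hne : x ≠ y) :
    L (matrixUnit x y) = Dmap (bElt L) (sig L) (matrixUnit x y) := by
  ext u v huv
  rw [Dmap_apply, IncidenceAlgebra.add_apply, IncidenceAlgebra.sub_apply, mul_unit_apply, unit_mul_apply, had_apply,
    matrixUnit_apply]
  by_cases hux : u = x
  · by_cases hvy : v = y
    · rw [if_pos ⟨hvy, hxy⟩, if_pos ⟨hux, hxy⟩, if_pos ⟨hux, hvy, hxy⟩, hux, hvy,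
        bElt_apply, bElt_apply, if_pos rfl, if_pos rfl, sig, if_neg hne]
      ring
    · rw [if_neg (fun hc => hvy hc.1), if_pos ⟨hux, hxy⟩, if_neg (fun hc => hvy hc.2.1),
        mul_zero, add_zero, hux]
      by_cases hvx : v = x
      · rw [hvx, bElt_apply, if_neg (Ne.symm hne), Qxx hL hxy hne]
        ring
      · rw [bElt_apply, if_neg (fun hc : y = v => hvy hc.symm),
          Qcol hL hxy hne (fun hc : v = x => hvx hc) (fun hc : v = y => hvy hc)]
        ring
  · by_cases huy : u = y
    · by_cases hvx : v = x
      · rw [if_neg (fun hc : v = y ∧ x ≤ y => hne (hvx.symm.trans hc.1)),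
          if_neg (fun hc => hux hc.1),
          if_neg (fun hc => hux hc.1), mul_zero, add_zero, huy, hvx,
          B4 hL htf hxy (huy ▸ hvx ▸ huv) hne]
        ring
      · by_cases hvy : v = y
        · rw [if_pos ⟨hvy, hxy⟩, if_neg (fun hc => hux hc.1), if_neg (fun hc => hux hc.1),
            mul_zero, add_zero, huy, hvy, bElt_apply, if_neg (Ne.symm hne),
            Qyy hL hxy hne]
          ring
        · rw [if_neg (fun hc => hvy hc.1), if_neg (fun hc => hux hc.1),
            if_neg (fun hc => hux hc.1), mul_zero, add_zero, huy,
            Qz1 hL hxy hne hvx hvy]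
          ring
    · by_cases hvy : v = y
      · rw [if_pos ⟨hvy, hxy⟩, if_neg (fun hc => hux hc.1), if_neg (fun hc => hux hc.1),
          mul_zero, add_zero, hvy, bElt_apply, if_neg hux,
          Qrow hL hxy hne hux huy, S4 hL hne hux huy,
          S3 hL (fun hc : x = u => hux hc.symm)]
        ring
      · by_cases hvx : v = x
        · rw [if_neg (fun hc => hvy hc.1), if_neg (fun hc => hux hc.1),
            if_neg (fun hc => hux hc.1), mul_zero, add_zero, hvx,
            Qz2 hL hxy hne hux huy]
          ring
        · by_cases huv2 : u = v
          · rw [if_neg (fun hc => hvy hc.1), if_neg (fun hc => hux hc.1),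
              if_neg (fun hc => hux hc.1), mul_zero, add_zero, ← huv2,
              Qdiag0 hL hxy hne hux huy]
            ring
          · rw [if_neg (fun hc => hvy hc.1), if_neg (fun hc => hux hc.1),
              if_neg (fun hc => hux hc.1), mul_zero, add_zero,
              Qz3 hL hxy hne hux huy hvx hvy]
            ring



end T

section U
variable {L : IncidenceAlgebra R X →ₗ[R] IncidenceAlgebra R X}
variable (hL : IsLieTripleDer L)
include hL

lemma D_unit_diag (x w : X) :
    Dmap (bElt L) (sig L) (matrixUnit x x) w w = 0 := by
  rw [Dmap_apply, IncidenceAlgebra.add_apply, IncidenceAlgebra.sub_apply, mul_unit_apply, unit_mul_apply, had_apply,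
    matrixUnit_apply]
  by_cases hwx : w = x
  · rw [if_pos ⟨hwx, le_refl x⟩, if_pos ⟨hwx, le_refl x⟩, bElt_apply, bElt_apply,
      if_pos hwx, if_pos hwx.symm, sig, if_pos rfl]
    ring
  · rw [if_neg (fun hc : w = x ∧ x ≤ x => hwx hc.1),
      if_neg (fun hc : w = x ∧ x ≤ x => hwx hc.1),
      if_neg (fun hc : w = x ∧ w = x ∧ x ≤ x => hwx hc.1)]
    ring

lemma F_diag_unit [Fintype X] (htf : TwoTorsionFree R) (x : X) :
    L (matrixUnit x x) - Dmap (bElt L) (sig L) (matrixUnit x x)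
      ∈ Set.center (IncidenceAlgebra R X) := by
  apply central_of
  · intro u v hne
    rw [IncidenceAlgebra.sub_apply, Dmap_apply, IncidenceAlgebra.add_apply, IncidenceAlgebra.sub_apply, mul_unit_apply, unit_mul_apply,
      had_apply, matrixUnit_apply]
    have hE : (if u = x ∧ v = x ∧ x ≤ x then (1:R) else 0) = 0 := by
      rw [if_neg]; rintro ⟨h1, h2, -⟩; exact hne (h1.trans h2.symm)
    rw [hE, mul_zero, add_zero]
    by_cases hux : u = x
    · rw [if_neg (fun hc : v = x ∧ x ≤ x => hne (hux.trans hc.1.symm)),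
        if_pos ⟨hux, le_refl x⟩,
        bElt_apply, if_neg (fun hc : x = v => hne (hux.trans hc)), hux]
      ring
    · rw [if_neg (fun hc : u = x ∧ x ≤ x => hux hc.1)]
      by_cases hvx : v = x
      · rw [if_pos ⟨hvx, le_refl x⟩, bElt_apply, if_neg hux, hvx,
          S3 hL (fun hc : x = u => hux hc.symm)]
        ring
      · rw [if_neg (fun hc : v = x ∧ x ≤ x => hvx hc.1),
          S4 hL hvx hne hux]
        ring
  · intro u v huv
    rw [IncidenceAlgebra.sub_apply, IncidenceAlgebra.sub_apply, D_unit_diag hL, D_unit_diag hL, hCc hL htf x huv]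

lemma F_central [Fintype X] (htf : TwoTorsionFree R) (f : IncidenceAlgebra R X) :
    L f - Dmap (bElt L) (sig L) f ∈ Set.center (IncidenceAlgebra R X) := by
  have key : L f - Dmap (bElt L) (sig L) f = ∑ p : X × X,
      f p.1 p.2 • (L (matrixUnit p.1 p.2) - Dmap (bElt L) (sig L) (matrixUnit p.1 p.2)) := by
    conv_lhs => rw [sum_repr f]
    rw [map_sum, map_sum, ← Finset.sum_sub_distrib]
    refine Finset.sum_congr rfl fun p _ => ?_
    rw [map_smul, map_smul, smul_sub]
  rw [key]
  refine Finset.sum_induction _ (· ∈ Set.center (IncidenceAlgebra R X))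
    (fun a b ha hb => Set.add_mem_center ha hb) (Set.zero_mem_center) ?_
  intro p _
  refine center_smul _ ?_
  by_cases hle : p.1 ≤ p.2
  · by_cases heq : p.1 = p.2
    · rw [heq]
      exact F_diag_unit hL htf p.2
    · rw [F_offdiag_unit hL htf hle heq, sub_self]
      exact Set.zero_mem_center
  · rw [matrixUnit_eq_zero hle, map_zero, map_zero, sub_zero]
    exact Set.zero_mem_center

lemma F_ann [Fintype X] (htf : TwoTorsionFree R) (f g h : IncidenceAlgebra R X) :
    L (lieBr (lieBr f g) h) - Dmap (bElt L) (sig L) (lieBr (lieBr f g) h) = 0 := by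
  set D := Dmap (bElt L) (sig L) with hD
  have hleib := Dmap_leibniz (bElt L) (sig L) (cocycle hL htf)
  have hDbr : ∀ a c : IncidenceAlgebra R X, D (lieBr a c) = lieBr (D a) c + lieBr a (D c) := by
    intro a c
    simp only [lieBr]
    rw [map_sub, hleib a c, hleib c a]
    abel
  have hDltd : D (lieBr (lieBr f g) h) = lieBr (lieBr (D f) g) h + lieBr (lieBr f (D g)) h
      + lieBr (lieBr f g) (D h) := by
    rw [hDbr (lieBr f g) h, hDbr f g, lieBr_add_left]
  rw [hL f g h, hDltd]
  have k1 : lieBr (lieBr (L f) g) h - lieBr (lieBr (D f) g) h = 0 := by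
    rw [← lieBr_sub_left, ← lieBr_sub_left, lieBr_central_left (F_central hL htf f),
      lieBr_zero_left]
  have k2 : lieBr (lieBr f (L g)) h - lieBr (lieBr f (D g)) h = 0 := by
    rw [← lieBr_sub_left, ← lieBr_sub_right, lieBr_central_right (F_central hL htf g),
      lieBr_zero_left]
  have k3 : lieBr (lieBr f g) (L h) - lieBr (lieBr f g) (D h) = 0 := by
    rw [← lieBr_sub_right, lieBr_central_right (F_central hL htf h)]
  rw [sub_eq_zero] at k1 k2 k3
  rw [k1, k2, k3]
  abel


end U
end Main
end LTDProof


/-- Every Lie triple derivation of the incidence algebra of a finite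
pre-ordered set (not necessarily connected) over a 2-torsion free commutative ring is proper. -/
theorem lieTripleDer_proper_finite [CommRing R] [Preorder X] [DecidableEq X]
    [Fintype X] [LocallyFiniteOrder X]
    (htf : TwoTorsionFree R)
    (L : IncidenceAlgebra R X →ₗ[R] IncidenceAlgebra R X) (hL : IsLieTripleDer L) :
    IsProperLTD L := by
  refine ⟨LTDProof.Dmap (LTDProof.bElt L) (LTDProof.sig L),
    L - LTDProof.Dmap (LTDProof.bElt L) (LTDProof.sig L),
    fun f g => LTDProof.Dmap_leibniz _ _ (LTDProof.cocycle hL htf) f g,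
    fun f => by rw [LinearMap.sub_apply]; exact LTDProof.F_central hL htf f,
    fun f g h => by rw [LinearMap.sub_apply]; exact LTDProof.F_ann hL htf f g h,
    by abel⟩
end

section
/- Let X be a locally finite pre-ordered set, R a commutative ring with unity, and L a Lie triple derivation of I(X,R). Then for all f ∈ I(X,R) and all x < y, L(f)(x,y) = L(f|_x^y)(x,y). -/
open IncidenceAlgebra
open scoped Classical

variable {R X : Type*}

/-- The restriction `f|_x^y` of `f` to the interval `[x, y]`. -/
noncomputable def restrict [CommRing R] [Preorder X] (x y : X)
    (f : IncidenceAlgebra R X) : IncidenceAlgebra R X :=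
  ⟨fun u v => if x ≤ u ∧ v ≤ y then f u v else 0, fun a b hab => by
    split_ifs with h
    · exact IncidenceAlgebra.apply_eq_zero_of_not_le hab f
    · rfl⟩

@[simp] lemma restrict_apply [CommRing R] [Preorder X] (x y : X)
    (f : IncidenceAlgebra R X) (u v : X) :
    restrict x y f u v = if x ≤ u ∧ v ≤ y then f u v else 0 := rfl


section Aux
open Finset
set_option linter.unusedSectionVars false
variable [CommRing R] [Preorder X] [DecidableEq X] [LocallyFiniteOrder X]

noncomputable def eDelta (a : X) : IncidenceAlgebra R X :=
  ⟨fun u v => if u = a ∧ v = a then 1 else 0, fun u v huv => by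
    split_ifs with h
    · obtain ⟨rfl, rfl⟩ := h; exact absurd le_rfl huv
    · rfl⟩

@[simp] lemma eDelta_apply (a u v : X) :
    (eDelta a : IncidenceAlgebra R X) u v = if u = a ∧ v = a then 1 else 0 := rfl

lemma e_mul (a : X) (f : IncidenceAlgebra R X) (u v : X) :
    ((eDelta a : IncidenceAlgebra R X) * f) u v = if u = a then f a v else 0 := by
  rw [mul_apply]
  split_ifs with h
  · subst h
    by_cases hle : u ≤ v
    · rw [Finset.sum_eq_single u]
      · simp
      · intro w _ hne; simp [hne]
      · intro hnm; exact absurd (Finset.mem_Icc.2 ⟨le_refl u, hle⟩) hnm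
    · rw [Icc_eq_empty hle, sum_empty, apply_eq_zero_of_not_le hle f]
  · exact Finset.sum_eq_zero fun w _ => by simp [h]

lemma mul_e (a : X) (f : IncidenceAlgebra R X) (u v : X) :
    (f * (eDelta a : IncidenceAlgebra R X)) u v = if v = a then f u a else 0 := by
  rw [mul_apply]
  split_ifs with h
  · subst h
    by_cases hle : u ≤ v
    · rw [Finset.sum_eq_single v]
      · simp
      · intro w _ hne; simp [hne]
      · intro hnm; exact absurd (Finset.mem_Icc.2 ⟨hle, le_refl v⟩) hnm
    · rw [Icc_eq_empty hle, sum_empty, apply_eq_zero_of_not_le hle f]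
  · exact Finset.sum_eq_zero fun w _ => by simp [h]

lemma lieBr_e_left (a : X) (f : IncidenceAlgebra R X) (u v : X) :
    lieBr (eDelta a) f u v
      = (if u = a then f a v else 0) - (if v = a then f u a else 0) := by
  simp only [lieBr, IncidenceAlgebra.sub_apply, e_mul, mul_e]

lemma lieBr_e_right (a : X) (f : IncidenceAlgebra R X) (u v : X) :
    lieBr f (eDelta a) u v
      = (if v = a then f u a else 0) - (if u = a then f a v else 0) := by
  simp only [lieBr, IncidenceAlgebra.sub_apply, e_mul, mul_e]

end Aux

/-- For a Lie triple derivation `L` and `x < y`,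
`L(f)(x,y) = L(f|_x^y)(x,y)`. -/
theorem lieTripleDer_apply_restrict [CommRing R] [Preorder X] [DecidableEq X]
    [LocallyFiniteOrder X]
    (L : IncidenceAlgebra R X →ₗ[R] IncidenceAlgebra R X) (hL : IsLieTripleDer L) :
    ∀ (f : IncidenceAlgebra R X) (x y : X), x ≤ y → x ≠ y →
      L f x y = L (restrict x y f) x y := by
  intro f x y hxy hne
  set g : IncidenceAlgebra R X := f - restrict x y f with hg
  have hg0 : ∀ u v : X, x ≤ u → v ≤ y → g u v = 0 := by
    intro u v hu hv
    by_cases huv : u ≤ v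
    · simp [hg, IncidenceAlgebra.sub_apply, restrict_apply, hu, hv]
    · simp [hg, IncidenceAlgebra.sub_apply, apply_eq_zero_of_not_le huv]
  have h1 : ∀ u : X, lieBr (eDelta x) g u y = 0 := by
    intro u
    rw [lieBr_e_left]
    have hxy0 : g x y = 0 := hg0 x y le_rfl le_rfl
    simp [Ne.symm hne, hxy0]
  have h2 : ∀ v : X, lieBr (eDelta x) g y v = 0 := by
    intro v
    rw [lieBr_e_left]
    have hyx0 : g y x = 0 := hg0 y x hxy hxy
    simp [Ne.symm hne, hyx0]
  have hkey : lieBr (lieBr (eDelta x) g) (eDelta y) = (0 : IncidenceAlgebra R X) := by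
    ext u v _
    rw [lieBr_e_right, IncidenceAlgebra.zero_apply, h1, h2]
    simp
  have h0 := hL (eDelta x) g (eDelta y)
  rw [hkey, map_zero] at h0
  have h0xy := congrFun (congrFun (congrArg DFunLike.coe h0.symm) x) y
  rw [IncidenceAlgebra.add_apply, IncidenceAlgebra.add_apply] at h0xy
  have T1 : lieBr (lieBr (L (eDelta x)) g) (eDelta y) x y = 0 := by
    rw [lieBr_e_right, if_pos rfl, if_neg hne]
    have hC : lieBr (L (eDelta x)) g x y = 0 := by
      rw [lieBr, IncidenceAlgebra.sub_apply, mul_apply, mul_apply]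
      rw [Finset.sum_eq_zero, Finset.sum_eq_zero, sub_zero]
      · intro w hw
        rw [hg0 x w le_rfl (Finset.mem_Icc.1 hw).2, zero_mul]
      · intro w hw
        rw [hg0 w y (Finset.mem_Icc.1 hw).1 le_rfl, mul_zero]
    rw [hC, sub_zero]
  have T2 : lieBr (lieBr (eDelta x) (L g)) (eDelta y) x y = L g x y := by
    rw [lieBr_e_right, if_pos rfl, if_neg hne, sub_zero, lieBr_e_left, if_pos rfl,
      if_neg (Ne.symm hne), sub_zero]
  have T3 : lieBr (lieBr (eDelta x) g) (L (eDelta y)) x y = 0 := by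
    rw [lieBr, IncidenceAlgebra.sub_apply, mul_apply, mul_apply]
    rw [Finset.sum_eq_zero, Finset.sum_eq_zero, sub_zero]
    · intro w hw
      rw [h1 w, mul_zero]
    · intro w hw
      have hA : lieBr (eDelta x) g x w = 0 := by
        rw [lieBr_e_left, if_pos rfl, hg0 x w le_rfl (Finset.mem_Icc.1 hw).2]
        simp [hg0 x x le_rfl hxy]
      rw [hA, zero_mul]
  rw [T1, T2, T3, zero_add, add_zero, IncidenceAlgebra.zero_apply] at h0xy
  rw [hg, map_sub, IncidenceAlgebra.sub_apply] at h0xy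
  exact sub_eq_zero.1 h0xy
end

section
/- Let X be a locally finite pre-ordered set, R a commutative ring with unity, and D a derivation of I(X,R). Then for all f ∈ I(X,R) and all x ≤ y (including x = y), D(f)(x,y) = D(f|_x^y)(x,y). -/
open IncidenceAlgebra
open scoped Classical

variable {R X : Type*}

/-- The delta function at a point `x`. -/
noncomputable def deltaAt [CommRing R] [Preorder X] [DecidableEq X] (x : X) :
    IncidenceAlgebra R X :=
  ⟨fun u v => if u = x ∧ v = x then 1 else 0, fun a b hab => by
    split_ifs with h
    · exact absurd (le_of_eq (h.1.trans h.2.symm)) hab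
    · rfl⟩

@[simp] lemma deltaAt_apply [CommRing R] [Preorder X] [DecidableEq X] (x u v : X) :
    (deltaAt (R := R) (X := X) x) u v = if u = x ∧ v = x then 1 else 0 := rfl

lemma deltaAt_mul [CommRing R] [Preorder X] [DecidableEq X] [LocallyFiniteOrder X]
    (x : X) (g : IncidenceAlgebra R X) (u v : X) :
    ((deltaAt x : IncidenceAlgebra R X) * g) u v = if u = x then g u v else 0 := by
  rw [IncidenceAlgebra.mul_apply]
  split_ifs with h
  · subst h
    by_cases huv : u ≤ v
    · rw [Finset.sum_eq_single u]
      · simp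
      · intro b _ hb
        simp [hb]
      · intro hu
        exact absurd (Finset.mem_Icc.2 ⟨le_refl u, huv⟩) hu
    · rw [Finset.Icc_eq_empty huv, Finset.sum_empty,
        IncidenceAlgebra.apply_eq_zero_of_not_le huv]
  · refine Finset.sum_eq_zero fun b hb => ?_
    rcases Finset.mem_Icc.1 hb with ⟨h1, h2⟩
    simp only [deltaAt_apply]
    split_ifs with h3
    · exact absurd h3.1 h
    · rw [zero_mul]

lemma mul_deltaAt [CommRing R] [Preorder X] [DecidableEq X] [LocallyFiniteOrder X]
    (y : X) (g : IncidenceAlgebra R X) (u v : X) :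
    (g * (deltaAt y : IncidenceAlgebra R X)) u v = if v = y then g u v else 0 := by
  rw [IncidenceAlgebra.mul_apply]
  split_ifs with h
  · subst h
    by_cases huv : u ≤ v
    · rw [Finset.sum_eq_single v]
      · simp
      · intro b _ hb
        simp [hb]
      · intro hu
        exact absurd (Finset.mem_Icc.2 ⟨huv, le_refl v⟩) hu
    · rw [Finset.Icc_eq_empty huv, Finset.sum_empty,
        IncidenceAlgebra.apply_eq_zero_of_not_le huv]
  · refine Finset.sum_eq_zero fun b hb => ?_
    simp only [deltaAt_apply]
    split_ifs with h3
    · exact absurd h3.2 h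
    · rw [mul_zero]

/-- For a derivation `D` and any `x ≤ y` (including `x = y`),
`D(f)(x,y) = D(f|_x^y)(x,y)`. -/
theorem derivation_apply_restrict [CommRing R] [Preorder X] [DecidableEq X]
    [LocallyFiniteOrder X]
    (D : IncidenceAlgebra R X →ₗ[R] IncidenceAlgebra R X)
    (hder : ∀ f g : IncidenceAlgebra R X, D (f * g) = D f * g + f * D g) :
    ∀ (f : IncidenceAlgebra R X) (x y : X), x ≤ y →
      D f x y = D (restrict x y f) x y := by
  intro f x y hxy
  set h : IncidenceAlgebra R X := f - restrict x y f with hh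
  -- h vanishes on the interval [x, y]
  have hvan : ∀ u v : X, x ≤ u → v ≤ y → h u v = 0 := by
    intro u v hu hv
    simp [hh, IncidenceAlgebra.sub_apply, hu, hv]
  suffices hz : D h x y = 0 by
    have : D f = D (restrict x y f) + D h := by
      rw [hh, map_sub]; abel
    rw [this, IncidenceAlgebra.add_apply, hz, add_zero]
  -- key identity
  have key : deltaAt x * h * deltaAt y = 0 := by
    ext u v _
    rw [mul_deltaAt, IncidenceAlgebra.zero_apply]
    split_ifs with h1
    · rw [h1, deltaAt_mul]
      split_ifs with h2
      · rw [h2]; exact hvan x y le_rfl le_rfl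
      · rfl
    · rfl
  have expand := hder (deltaAt x * h) (deltaAt y)
  rw [hder (deltaAt x) h, key] at expand
  have expand2 : (0 : IncidenceAlgebra R X) =
      D (deltaAt x) * h * deltaAt y + deltaAt x * D h * deltaAt y
        + (deltaAt x * h) * D (deltaAt y) := by
    rw [← map_zero D, expand]; noncomm_ring
  have e0 := congrArg (fun g : IncidenceAlgebra R X => g x y) expand2
  simp only [IncidenceAlgebra.add_apply, IncidenceAlgebra.zero_apply] at e0
  have t1 : (D (deltaAt x) * h * deltaAt y : IncidenceAlgebra R X) x y = 0 := by
    rw [mul_deltaAt, if_pos rfl, IncidenceAlgebra.mul_apply]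
    refine Finset.sum_eq_zero fun b hb => ?_
    rcases Finset.mem_Icc.1 hb with ⟨h1, h2⟩
    rw [hvan b y h1 le_rfl, mul_zero]
  have t2 : (deltaAt x * D h * deltaAt y : IncidenceAlgebra R X) x y = D h x y := by
    rw [mul_deltaAt, if_pos rfl, deltaAt_mul, if_pos rfl]
  have t3 : ((deltaAt x * h) * D (deltaAt y) : IncidenceAlgebra R X) x y = 0 := by
    rw [IncidenceAlgebra.mul_apply]
    refine Finset.sum_eq_zero fun b hb => ?_
    rcases Finset.mem_Icc.1 hb with ⟨h1, h2⟩
    rw [deltaAt_mul, if_pos rfl, hvan x b le_rfl h2, zero_mul]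
  rw [t1, t2, t3] at e0
  have := e0.symm
  simpa using this
end

section
/- Let X be a connected pre-ordered set (with at least 2 elements, finite), R a 2-torsion free commutative ring with unity, and L a Lie triple derivation of I(X,R). If i, j ∈ X are distinct with i ≤ j and j ≤ i, then C^{ii}_{ii} = C^{jj}_{jj}, where C^{ij}_{xy} are the coefficients of L on the matrix-unit basis. -/
open IncidenceAlgebra
open scoped Classical

variable {R X : Type*}

lemma muApply [CommRing R] [Preorder X] [DecidableEq X] (x y u v : X) :
    (matrixUnit (R := R) x y : IncidenceAlgebra R X) u v
      = if u = x ∧ v = y ∧ x ≤ y then 1 else 0 := rfl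

lemma mul_mu [CommRing R] [Preorder X] [DecidableEq X] [LocallyFiniteOrder X]
    (f : IncidenceAlgebra R X) (x y a b : X) :
    (f * matrixUnit x y : IncidenceAlgebra R X) a b = f a x * (matrixUnit (R := R) x y : IncidenceAlgebra R X) x b := by
  rw [mul_apply]
  refine Finset.sum_eq_single x (fun z _ hz => ?_) (fun hx => ?_)
  · rw [muApply]; simp [hz]
  · by_cases hax : a ≤ x
    · have hxb : ¬ x ≤ b := fun h => hx (Finset.mem_Icc.2 ⟨hax, h⟩)
      rw [muApply]
      split_ifs with h
      · exact absurd (le_of_le_of_eq h.2.2 h.2.1.symm) hxb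
      · exact mul_zero _
    · rw [apply_eq_zero_of_not_le hax, zero_mul]

lemma mu_mul [CommRing R] [Preorder X] [DecidableEq X] [LocallyFiniteOrder X]
    (f : IncidenceAlgebra R X) (x y a b : X) :
    (matrixUnit x y * f : IncidenceAlgebra R X) a b = (matrixUnit (R := R) x y : IncidenceAlgebra R X) a y * f y b := by
  rw [mul_apply]
  refine Finset.sum_eq_single y (fun z _ hz => ?_) (fun hy => ?_)
  · rw [muApply]; simp [hz]
  · by_cases hyb : y ≤ b
    · have hay : ¬ a ≤ y := fun h => hy (Finset.mem_Icc.2 ⟨h, hyb⟩)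
      rw [muApply]
      split_ifs with h
      · exact absurd (le_of_eq_of_le h.1 h.2.2) hay
      · exact zero_mul _
    · rw [apply_eq_zero_of_not_le hyb, mul_zero]

lemma lieBr_apply [CommRing R] [Preorder X] [LocallyFiniteOrder X]
    (f g : IncidenceAlgebra R X) (a b : X) :
    lieBr f g a b = (f * g) a b - (g * f) a b := rfl

/-- If `i ≠ j` with `i ≤ j` and `j ≤ i`, then `C^{ii}_{ii} = C^{jj}_{jj}`. -/
theorem lieTripleDer_diag_coeff_eq_of_cycle [CommRing R] [Preorder X] [DecidableEq X]
    [Fintype X] [LocallyFiniteOrder X]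
    (htf : TwoTorsionFree R) (hconn : OrdConnected' X) (hcard : 1 < Fintype.card X)
    (L : IncidenceAlgebra R X →ₗ[R] IncidenceAlgebra R X) (hL : IsLieTripleDer L) :
    ∀ i j : X, i ≠ j → i ≤ j → j ≤ i →
      L (matrixUnit i i) i i = L (matrixUnit j j) j j := by
  intro i j hij hle hge
  have hji : j ≠ i := hij.symm
  -- key bracket identity 1
  have key1 : lieBr (lieBr (matrixUnit i i) (matrixUnit i j)) (matrixUnit j i)
      = matrixUnit i i - matrixUnit (R := R) j j := by
    ext a b _
    simp only [lieBr, IncidenceAlgebra.sub_apply, mul_mu, mu_mul, muApply]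
    by_cases hai : a = i <;> by_cases haj : a = j <;>
      by_cases hbi : b = i <;> by_cases hbj : b = j <;>
      simp_all [hle, hge]
  have key2 : lieBr (lieBr (matrixUnit i j) (matrixUnit j i)) (matrixUnit i j)
      = matrixUnit i j + matrixUnit (R := R) i j := by
    ext a b _
    simp only [lieBr, IncidenceAlgebra.sub_apply, IncidenceAlgebra.add_apply, mul_mu, mu_mul, muApply]
    by_cases hai : a = i <;> by_cases haj : a = j <;>
      by_cases hbi : b = i <;> by_cases hbj : b = j <;>
      simp_all [hle, hge]
  have br1 : lieBr (matrixUnit i i) (matrixUnit i j) = matrixUnit (R := R) i j := by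
    ext a b _
    simp only [lieBr, IncidenceAlgebra.sub_apply, mul_mu, mu_mul, muApply]
    by_cases hai : a = i <;> by_cases haj : a = j <;>
      by_cases hbi : b = i <;> by_cases hbj : b = j <;>
      simp_all [hle, hge]
  have br2 : lieBr (matrixUnit i j) (matrixUnit j i)
      = matrixUnit i i - matrixUnit (R := R) j j := by
    ext a b _
    simp only [lieBr, IncidenceAlgebra.sub_apply, mul_mu, mu_mul, muApply]
    by_cases hai : a = i <;> by_cases haj : a = j <;>
      by_cases hbi : b = i <;> by_cases hbj : b = j <;>
      simp_all [hle, hge]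
  have E1 := hL (matrixUnit i i) (matrixUnit i j) (matrixUnit j i)
  rw [key1, map_sub, br1] at E1
  have e1 := congrArg (fun f : IncidenceAlgebra R X => f j j) E1
  simp only [IncidenceAlgebra.sub_apply, IncidenceAlgebra.add_apply, lieBr, sub_mul, mul_sub, mul_mu, mu_mul, muApply] at e1
  simp [hij, hji, hle, hge] at e1
  have E2 := hL (matrixUnit i j) (matrixUnit j i) (matrixUnit i j)
  rw [key2, map_add, br2] at E2
  have e2 := congrArg (fun f : IncidenceAlgebra R X => f i j) E2
  simp only [IncidenceAlgebra.sub_apply, IncidenceAlgebra.add_apply, lieBr, sub_mul, mul_sub, mul_mu, mu_mul, muApply] at e2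
  simp [hij, hji, hle, hge] at e2
  have hBD : (L (matrixUnit i j)) i j + (L (matrixUnit j i)) j i = 0 :=
    htf _ (by linear_combination e2)
  linear_combination e1 - hBD
end
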